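/- arXiv:2302.09729 — 2 statements merged into one kernel-verified Lean document; each statement's English description precedes it below -/
import Mathlib

section
/- If Y is a binomial random variable with parameters K and p where p = m/K for some integer m with 0 < m < K, then P(Y = m) ≥ (1/3)·(p·(1-p)·K)^(-1/2). -/
open Real Nat Filter Topology

lemma stir_ge (n : ℕ) : Real.sqrt π ≤ Stirling.stirlingSeq (n + 1) := by
  have ha := Stirling.stirlingSeq'_antitone
  have h : Tendsto (Stirling.stirlingSeq ∘ Nat.succ) atTop (𝓝 (Real.sqrt π)) :=
    Stirling.tendsto_stirlingSeq_sqrt_pi.comp (tendsto_add_atTop_nat 1)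
  exact ha.le_of_tendsto h n

lemma stir_le (n : ℕ) : Stirling.stirlingSeq (n + 1) ≤ Real.exp 1 / Real.sqrt 2 := by
  have := Stirling.stirlingSeq'_antitone (Nat.zero_le n)
  simpa [Stirling.stirlingSeq_one] using this

lemma fac_ge (n : ℕ) (hn : n ≠ 0) :
    Real.sqrt π * (Real.sqrt (2 * n) * ((n : ℝ) / Real.exp 1) ^ n) ≤ n ! := by
  obtain ⟨m, rfl⟩ := Nat.exists_eq_succ_of_ne_zero hn
  have h := stir_ge m
  have hd : (0:ℝ) < Real.sqrt (2 * (m + 1 : ℕ)) * (((m + 1 : ℕ) : ℝ) / Real.exp 1) ^ (m + 1) := by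
    positivity
  rw [Stirling.stirlingSeq, le_div_iff₀ hd] at h
  simpa [mul_assoc] using h

lemma fac_le (n : ℕ) (hn : n ≠ 0) :
    (n ! : ℝ) ≤ (Real.exp 1 / Real.sqrt 2) * (Real.sqrt (2 * n) * ((n : ℝ) / Real.exp 1) ^ n) := by
  obtain ⟨m, rfl⟩ := Nat.exists_eq_succ_of_ne_zero hn
  have h := stir_le m
  have hd : (0:ℝ) < Real.sqrt (2 * (m + 1 : ℕ)) * (((m + 1 : ℕ) : ℝ) / Real.exp 1) ^ (m + 1) := by
    positivity
  rw [Stirling.stirlingSeq, div_le_iff₀ hd] at h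
  simpa [mul_assoc] using h

lemma numeric : Real.exp 1 ^ 2 ≤ 3 * Real.sqrt (2 * π) := by
  have h1 : Real.exp 1 < 2.7182818286 := Real.exp_one_lt_d9
  have h2 : (2.506 : ℝ) ≤ Real.sqrt (2 * π) := by
    rw [show (2.506:ℝ) = Real.sqrt (2.506^2) by rw [Real.sqrt_sq]; norm_num]
    apply Real.sqrt_le_sqrt
    nlinarith [Real.pi_gt_d6]
  nlinarith [Real.exp_pos 1]

set_option maxHeartbeats 1000000 in
/-- Point-probability lower bound for a binomial random variable at its mean:
if `Y ~ Bin(K, p)` with `p = m/K`, `0 < m < K`, then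
`P(Y = m) ≥ (1/3)·(p(1-p)K)^(-1/2)`. -/
theorem binomial_point_prob (K m : ℕ) (hm0 : 0 < m) (hmK : m < K) (p : ℝ)
    (hp : p = (m : ℝ) / K) :
    (1 / 3) * (p * (1 - p) * K) ^ (-(1 / 2 : ℝ))
      ≤ (K.choose m : ℝ) * p ^ m * (1 - p) ^ (K - m) := by
  set k := K - m with hkdef
  have hKmk : K = m + k := by omega
  have hm' : (0:ℝ) < m := by exact_mod_cast hm0
  have hk' : (0:ℝ) < k := by exact_mod_cast (by omega : 0 < k)
  have hK' : (0:ℝ) < K := by exact_mod_cast (by omega : 0 < K)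
  have hKc : (K : ℝ) = (m : ℝ) + k := by rw [hKmk]; push_cast; ring
  have hq : 1 - p = (k : ℝ) / K := by
    rw [hp, eq_div_iff hK'.ne', sub_mul, div_mul_cancel₀ _ hK'.ne', hKc]; ring
  set E := Real.exp 1 with hE
  have hE' : (0:ℝ) < E := Real.exp_pos 1
  -- rewrite LHS
  have hx : p * (1 - p) * K = (m : ℝ) * k / K := by
    rw [hq, hp]; field_simp
  have hLHS : (p * (1 - p) * K) ^ (-(1/2 : ℝ)) = Real.sqrt K / Real.sqrt ((m:ℝ) * k) := by
    rw [hx, Real.rpow_neg (by positivity), ← Real.sqrt_eq_rpow,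
      Real.sqrt_div (by positivity), inv_div]
  have hchoose : (K.choose m : ℝ) = K ! / (m ! * k !) := Nat.cast_choose ℝ hmK.le
  rw [hLHS, hchoose, hq, hp]
  have hFK := fac_ge K (by omega)
  have hFm := fac_le m (by omega)
  have hFk := fac_le k (by omega)
  set A := Real.sqrt (2 * m) * ((m : ℝ) / E) ^ m with hA
  set B := Real.sqrt (2 * k) * ((k : ℝ) / E) ^ k with hB
  set C := Real.sqrt (2 * K) * ((K : ℝ) / E) ^ K with hC
  have hApos : 0 < A := by rw [hA]; positivity
  have hBpos : 0 < B := by rw [hB]; positivity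
  have hCpos : 0 < C := by rw [hC]; positivity
  have step1 : Real.sqrt π * C / ((E / Real.sqrt 2) * A * ((E / Real.sqrt 2) * B))
      ≤ (K ! : ℝ) / (m ! * k !) := by
    apply div_le_div₀ (by positivity) hFK (by positivity)
    exact mul_le_mul hFm hFk (by positivity) (by positivity)
  have hmono : Real.sqrt π * C / ((E / Real.sqrt 2) * A * ((E / Real.sqrt 2) * B))
        * (((m:ℝ)/K) ^ m * ((k:ℝ)/K) ^ k)
      ≤ (K ! : ℝ) / (m ! * k !) * (((m:ℝ)/K) ^ m * ((k:ℝ)/K) ^ k) :=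
    mul_le_mul_of_nonneg_right step1 (by positivity)
  have hpK : ((K:ℝ)/E) ^ K = ((K:ℝ)/E) ^ m * ((K:ℝ)/E) ^ k := by
    rw [← pow_add, ← hKmk]
  have e1 : (K:ℝ)/E * ((m:ℝ)/K) = (m:ℝ)/E := by
    field_simp
  have e2 : (K:ℝ)/E * ((k:ℝ)/K) = (k:ℝ)/E := by
    field_simp
  have hpowsimp : C * (((m:ℝ)/K) ^ m * ((k:ℝ)/K) ^ k)
      = Real.sqrt (2 * K) * (((m:ℝ)/E) ^ m * ((k:ℝ)/E) ^ k) := by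
    rw [hC, hpK, mul_assoc]
    congr 1
    rw [show ((K:ℝ)/E) ^ m * ((K:ℝ)/E) ^ k * (((m:ℝ)/K) ^ m * ((k:ℝ)/K) ^ k)
        = ((K:ℝ)/E * ((m:ℝ)/K)) ^ m * ((K:ℝ)/E * ((k:ℝ)/K)) ^ k by ring]
    rw [e1, e2]
  set P := ((m:ℝ)/E) ^ m * ((k:ℝ)/E) ^ k with hP
  have hPpos : 0 < P := by rw [hP]; positivity
  have key : Real.sqrt π * C / ((E / Real.sqrt 2) * A * ((E / Real.sqrt 2) * B))
        * (((m:ℝ)/K) ^ m * ((k:ℝ)/K) ^ k)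
      = Real.sqrt (2*π) / E ^ 2 * (Real.sqrt K / Real.sqrt ((m:ℝ)*k)) := by
    rw [div_mul_eq_mul_div, mul_assoc, hpowsimp, hA, hB]
    rw [show (E / Real.sqrt 2) * (Real.sqrt (2 * m) * ((m : ℝ) / E) ^ m)
          * ((E / Real.sqrt 2) * (Real.sqrt (2 * k) * ((k : ℝ) / E) ^ k))
        = (E / Real.sqrt 2) ^ 2 * (Real.sqrt (2*m) * Real.sqrt (2*k)) * P by rw [hP]; ring]
    rw [show Real.sqrt π * (Real.sqrt (2*K) * P)
        = (Real.sqrt π * Real.sqrt (2*K)) * P by ring]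
    rw [mul_div_mul_right _ _ hPpos.ne']
    rw [Real.sqrt_mul (by norm_num) (K:ℝ), Real.sqrt_mul (by norm_num) (m:ℝ),
      Real.sqrt_mul (by norm_num) (k:ℝ), Real.sqrt_mul (by norm_num) π,
      Real.sqrt_mul hm'.le (k:ℝ), div_pow, Real.sq_sqrt (by norm_num : (0:ℝ) ≤ 2)]
    have h2 : Real.sqrt 2 ≠ 0 := by positivity
    have hsm : Real.sqrt (m:ℝ) ≠ 0 := by positivity
    have hsk : Real.sqrt (k:ℝ) ≠ 0 := by positivity
    field_simp
    have h22 : Real.sqrt 2 * Real.sqrt 2 = 2 := Real.mul_self_sqrt (by norm_num)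
    linear_combination (-1 : ℝ) * h22
  have numstep : (1:ℝ)/3 * (Real.sqrt K / Real.sqrt ((m:ℝ)*k))
      ≤ Real.sqrt (2*π) / E ^ 2 * (Real.sqrt K / Real.sqrt ((m:ℝ)*k)) := by
    apply mul_le_mul_of_nonneg_right _ (by positivity)
    rw [div_le_div_iff₀ (by norm_num) (by positivity)]
    linarith [numeric]
  calc (1:ℝ)/3 * (Real.sqrt K / Real.sqrt ((m:ℝ)*k))
      ≤ Real.sqrt (2*π) / E ^ 2 * (Real.sqrt K / Real.sqrt ((m:ℝ)*k)) := numstep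
    _ = Real.sqrt π * C / ((E / Real.sqrt 2) * A * ((E / Real.sqrt 2) * B))
        * (((m:ℝ)/K) ^ m * ((k:ℝ)/K) ^ k) := key.symm
    _ ≤ (K ! : ℝ) / (m ! * k !) * (((m:ℝ)/K) ^ m * ((k:ℝ)/K) ^ k) := hmono
    _ = (K ! : ℝ) / (m ! * k !) * ((m:ℝ)/K) ^ m * ((k:ℝ)/K) ^ k := (mul_assoc _ _ _).symm
end

section
/- With λ = (1-ζ')·‖d‖₁/2 and Λ_{jk} = (1-ζ)·‖d‖₁/(‖d‖₁ + d_j·d_k), the product λ·Λ_{jk}·Q_{jk} equals (1 + O(ζ + ζ' + Δ/‖d‖₁))·d_j·d_k/(‖d‖₁ + d_j·d_k), where Q_{jk} = d_j·d_k/Σ_{h<ℓ} d_h·d_ℓ. -/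
open Finset

lemma pair_sum_aux (n : ℕ) (f : Fin n → ℝ) :
    2 * ∑ p ∈ Finset.univ.filter (fun p : Fin n × Fin n => p.1 < p.2), f p.1 * f p.2
      + ∑ i, f i * f i = (∑ i, f i) ^ 2 := by
  have h1 : (∑ i, f i) ^ 2 = ∑ p : Fin n × Fin n, f p.1 * f p.2 := by
    rw [sq, Finset.sum_mul_sum, ← Finset.univ_product_univ, Finset.sum_product]
  have h2 := Finset.sum_filter_add_sum_filter_not (Finset.univ : Finset (Fin n × Fin n))
    (fun p => p.1 < p.2) (fun p => f p.1 * f p.2)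
  have h3 := Finset.sum_filter_add_sum_filter_not
    (Finset.univ.filter (fun p : Fin n × Fin n => ¬ p.1 < p.2))
    (fun p => p.2 < p.1) (fun p => f p.1 * f p.2)
  have hswap : ∑ p ∈ (Finset.univ.filter (fun p : Fin n × Fin n => ¬ p.1 < p.2)).filter
        (fun p => p.2 < p.1), f p.1 * f p.2
      = ∑ p ∈ Finset.univ.filter (fun p : Fin n × Fin n => p.1 < p.2), f p.1 * f p.2 := by
    apply Finset.sum_nbij' (fun p => Prod.swap p) (fun p => Prod.swap p) <;>
      simp [Finset.mem_filter, mul_comm] <;> intros <;> omega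
  have hdiag : ∑ p ∈ (Finset.univ.filter (fun p : Fin n × Fin n => ¬ p.1 < p.2)).filter
        (fun p => ¬ p.2 < p.1), f p.1 * f p.2 = ∑ i, f i * f i := by
    apply Finset.sum_nbij' (fun p => p.1) (fun i => (i, i))
    · intro p hp
      simp only [Finset.mem_filter, Finset.mem_univ, true_and] at hp
      simp
    · intro i _; simp
    · intro p hp
      simp only [Finset.mem_filter, Finset.mem_univ, true_and] at hp
      have : p.1 = p.2 := le_antisymm (not_lt.1 hp.2) (not_lt.1 hp.1)
      exact Prod.ext rfl this
    · intro i _; rfl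
    · intro p hp
      simp only [Finset.mem_filter, Finset.mem_univ, true_and] at hp
      have : p.1 = p.2 := le_antisymm (not_lt.1 hp.2) (not_lt.1 hp.1)
      rw [this]
  linarith [h1, h2, h3, hswap, hdiag]

set_option maxHeartbeats 1000000 in
/-- With `λ = (1-ζ')‖d‖₁/2`, `Λ_{jk} = (1-ζ)‖d‖₁/(‖d‖₁ + d_j d_k)` and
`Q_{jk} = d_j d_k / ∑_{h<ℓ} d_h d_ℓ`, the product `λ Λ_{jk} Q_{jk}` equals
`(1 + O(ζ + ζ' + Δ/‖d‖₁)) · d_j d_k/(‖d‖₁ + d_j d_k)`: there is an absolute constant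
`C` such that (under `Δ ≤ ‖d‖₁/2`)
`|λ Λ_{jk} Q_{jk} - P_{jk}| ≤ C(ζ + ζ' + Δ/‖d‖₁) P_{jk}`. -/
theorem lambda_Lambda_Q_asymp :
    ∃ C : ℝ, 0 < C ∧ ∀ (n : ℕ) (d : Fin n → ℕ) (ζ ζ' : ℝ) (Δ : ℕ),
      2 ≤ n → (∀ i, 0 < d i) → (∀ i, d i ≤ Δ) →
      0 < ζ → ζ < 1 → 0 < ζ' → ζ' < 1 →
      (Δ : ℝ) ≤ (∑ i, (d i : ℝ)) / 2 →
      ∀ j k : Fin n, j ≠ k →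
        |((1 - ζ') * (∑ i, (d i : ℝ)) / 2) *
              ((1 - ζ) * (∑ i, (d i : ℝ)) / ((∑ i, (d i : ℝ)) + d j * d k)) *
              ((d j : ℝ) * d k /
                ∑ p ∈ Finset.univ.filter (fun p : Fin n × Fin n => p.1 < p.2),
                  (d p.1 : ℝ) * d p.2)
            - (d j : ℝ) * d k / ((∑ i, (d i : ℝ)) + d j * d k)|
          ≤ C * (ζ + ζ' + (Δ : ℝ) / ∑ i, (d i : ℝ)) *
              ((d j : ℝ) * d k / ((∑ i, (d i : ℝ)) + d j * d k)) := by
  refine ⟨2, by norm_num, ?_⟩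
  intro n d ζ ζ' Δ hn hd hdΔ hζ0 hζ1 hζ'0 hζ'1 hΔ j k hjk
  set S : ℝ := ∑ i, (d i : ℝ) with hS
  set T : ℝ := ∑ p ∈ Finset.univ.filter (fun p : Fin n × Fin n => p.1 < p.2),
      (d p.1 : ℝ) * d p.2 with hT
  set Q2 : ℝ := ∑ i, (d i : ℝ) * d i with hQ2
  have hpair : 2 * T + Q2 = S ^ 2 := pair_sum_aux n (fun i => (d i : ℝ))
  have hSpos : 0 < S := by
    apply Finset.sum_pos (fun i _ => by exact_mod_cast hd i)
    exact ⟨⟨0, by omega⟩, Finset.mem_univ _⟩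
  have hQ2pos : 0 < Q2 := by
    apply Finset.sum_pos (fun i _ => by have := hd i; positivity)
    exact ⟨⟨0, by omega⟩, Finset.mem_univ _⟩
  have hQ2Δ : Q2 ≤ Δ * S := by
    rw [hQ2, hS, Finset.mul_sum]
    apply Finset.sum_le_sum
    intro i _
    have h1 : (d i : ℝ) ≤ Δ := by exact_mod_cast hdΔ i
    have h2 : (0:ℝ) ≤ d i := by positivity
    nlinarith
  have hΔpos : (0:ℝ) < Δ := by
    have h1 := hd ⟨0, by omega⟩
    have h2 := hdΔ ⟨0, by omega⟩
    exact_mod_cast lt_of_lt_of_le h1 h2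
  have hTlb : S ^ 2 / 2 ≤ 2 * T := by nlinarith
  have hTpos : 0 < T := by nlinarith
  have hdjk : (0:ℝ) < (d j : ℝ) * d k := by
    have := hd j; have := hd k; positivity
  have hden : (0:ℝ) < S + (d j : ℝ) * d k := by linarith
  set m : ℝ := (d j : ℝ) * d k with hm
  clear_value S T Q2 m
  clear hS hT hQ2 hm hd hdΔ hjk j k d hn
  set P : ℝ := m / (S + m) with hP
  have hPpos : 0 < P := by positivity
  set r : ℝ := S ^ 2 / (2 * T) with hr
  set c : ℝ := (1 - ζ) * (1 - ζ') with hc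
  have heq : ((1 - ζ') * S / 2) * ((1 - ζ) * S / (S + m)) *
      (m / T) = P * (c * r) := by
    rw [hP, hr, hc]
    field_simp
  rw [heq]
  have habs : |P * (c * r) - P| = P * |c * r - 1| := by
    have h : P * (c * r) - P = P * (c * r - 1) := by ring
    rw [h, abs_mul, abs_of_pos hPpos]
  rw [habs]
  clear_value P r c
  have hr1 : 1 ≤ r := by
    rw [hr, le_div_iff₀ (by linarith : (0:ℝ) < 2 * T)]
    nlinarith
  have hrub : r ≤ 1 + 2 * (Δ / S) := by
    have a1 : S * Q2 ≤ Δ * S ^ 2 := by nlinarith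
    have a2 : 2 * Δ * Q2 ≤ Δ * S ^ 2 := by nlinarith
    have hkey3 : S ^ 2 * S ≤ (S + 2 * Δ) * (2 * T) := by nlinarith
    rw [hr, div_le_iff₀ (by linarith : (0:ℝ) < 2 * T)]
    have h2 : (1 + 2 * (Δ / S)) * (2 * T) = ((S + 2 * Δ) * (2 * T)) / S := by
      field_simp
    rw [h2, le_div_iff₀ hSpos]
    linarith [hkey3]
  have hc01 : 0 < c := by rw [hc]; nlinarith
  have hcub : c ≤ 1 := by rw [hc]; nlinarith
  have hkey : |c * r - 1| ≤ 2 * (ζ + ζ' + Δ / S) := by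
    rw [abs_le]
    have hds : 0 < Δ / S := by positivity
    constructor
    · have h : c ≤ c * r := le_mul_of_one_le_right (le_of_lt hc01) hr1
      nlinarith [mul_pos hζ0 hζ'0]
    · have h1 : c * r ≤ r := by nlinarith
      linarith
  calc P * |c * r - 1| ≤ P * (2 * (ζ + ζ' + Δ / S)) :=
        mul_le_mul_of_nonneg_left hkey (le_of_lt hPpos)
    _ = 2 * (ζ + ζ' + Δ / S) * P := by ring
end
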